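/- Let X be a random vector in ℝ^d with E[‖X‖²] < ∞, A ∈ ℝ^{(k-1)×d} with k-1 < d, b' = AX, and let E be a random vector with second-moment matrix K = E[EEᵀ]. Define X̂ = A⁺b' + (1/2)(I - A⁺A)1 + A⁺E. Then E[‖X - X̂‖²] = Tr((I - A⁺A) K_{1/2}) + Tr((A⁺)ᵀA⁺ K), where K_{1/2} = E[(X - ½1)(X - ½1)ᵀ]. -/

import Mathlib

open Matrix MeasureTheory

-- pointwise expansion of sum of squares of a matrix-vector product
lemma pt_expand {n p : ℕ} (B : Matrix (Fin n) (Fin p) ℝ) (z : Fin p → ℝ) :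
    ∑ i, ((B *ᵥ z) i) ^ 2 = ∑ j, ∑ k, (Bᵀ * B) j k * (z j * z k) := by
  simp only [Matrix.mulVec, dotProduct, Matrix.mul_apply, Matrix.transpose_apply,
    sq, Finset.sum_mul_sum, Finset.sum_mul, Finset.mul_sum]
  rw [Finset.sum_comm]
  refine Finset.sum_congr rfl fun j _ => ?_
  rw [Finset.sum_comm]
  refine Finset.sum_congr rfl fun k _ => Finset.sum_congr rfl fun i _ => by ring

lemma key_int {n p : ℕ} {Ω : Type*} [MeasurableSpace Ω] (μ : Measure Ω)
    (B : Matrix (Fin n) (Fin p) ℝ) (Z : Ω → Fin p → ℝ)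
    (hZ : ∀ i j, Integrable (fun ω => Z ω i * Z ω j) μ) :
    Integrable (fun ω => ∑ i, ((B *ᵥ Z ω) i) ^ 2) μ ∧
    ∫ ω, ∑ i, ((B *ᵥ Z ω) i) ^ 2 ∂μ
      = ∑ j, ∑ k, (Bᵀ * B) j k * ∫ ω, Z ω j * Z ω k ∂μ := by
  have hpt : (fun ω => ∑ i, ((B *ᵥ Z ω) i) ^ 2)
      = fun ω => ∑ j, ∑ k, (Bᵀ * B) j k * (Z ω j * Z ω k) := by
    funext ω; exact pt_expand B (Z ω)
  constructor
  · rw [hpt]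
    exact integrable_finset_sum _ fun j _ => integrable_finset_sum _ fun k _ =>
      (hZ j k).const_mul _
  · rw [hpt]
    rw [integral_finset_sum (f := fun j ω => ∑ k, (Bᵀ * B) j k * (Z ω j * Z ω k)) _
      fun j _ => integrable_finset_sum _ fun k _ => (hZ j k).const_mul _]
    refine Finset.sum_congr rfl fun j _ => ?_
    rw [integral_finset_sum (f := fun k ω => (Bᵀ * B) j k * (Z ω j * Z ω k)) _
      fun k _ => (hZ j k).const_mul _]
    exact Finset.sum_congr rfl fun k _ => MeasureTheory.integral_const_mul _ _

lemma cross_zero {n p q : ℕ} (B : Matrix (Fin n) (Fin p) ℝ) (C : Matrix (Fin n) (Fin q) ℝ)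
    (hBC : Bᵀ * C = 0) (y : Fin p → ℝ) (e : Fin q → ℝ) :
    ∑ i, (B *ᵥ y) i * (C *ᵥ e) i = 0 := by
  have h : (B *ᵥ y) ⬝ᵥ (C *ᵥ e) = 0 := by
    rw [show B *ᵥ y = y ᵥ* Bᵀ by rw [Matrix.vecMul_transpose],
      Matrix.dotProduct_mulVec, Matrix.vecMul_vecMul, hBC]
    simp
  simpa [dotProduct] using h

/-- MSE of the half* estimator with noisy score. With `A⁺` the Moore–Penrose
pseudoinverse of `A` (`k-1 < d`), `X̂ = A⁺(AX) + ½(I - A⁺A)𝟙 + A⁺E`, one has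
`E[‖X - X̂‖²] = Tr((I - A⁺A)K_{½𝟙}) + Tr((A⁺)ᵀA⁺K)`. -/
theorem stmt6 {m d : ℕ} {Ω : Type*} [MeasurableSpace Ω]
    (μ : Measure Ω) [IsProbabilityMeasure μ]
    (hmd : m < d)
    (A : Matrix (Fin m) (Fin d) ℝ) (Ap : Matrix (Fin d) (Fin m) ℝ)
    (h1 : A * Ap * A = A) (h2 : Ap * A * Ap = Ap)
    (h3 : (A * Ap)ᵀ = A * Ap) (h4 : (Ap * A)ᵀ = Ap * A)
    (X : Ω → Fin d → ℝ) (E : Ω → Fin m → ℝ)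
    (hXi : ∀ i, Integrable (fun ω => X ω i) μ)
    (hXij : ∀ i j, Integrable (fun ω => X ω i * X ω j) μ)
    (hEij : ∀ i j, Integrable (fun ω => E ω i * E ω j) μ)
    (Khalf : Matrix (Fin d) (Fin d) ℝ)
    (hKhalf : ∀ i j, Khalf i j = ∫ ω, (X ω i - 1/2) * (X ω j - 1/2) ∂μ)
    (K : Matrix (Fin m) (Fin m) ℝ)
    (hK : ∀ i j, K i j = ∫ ω, E ω i * E ω j ∂μ)
    (Xhat : Ω → Fin d → ℝ)
    (hXhat : ∀ ω, Xhat ω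
      = Ap *ᵥ (A *ᵥ X ω) + (1/2 : ℝ) • ((1 - Ap * A) *ᵥ (fun _ => 1)) + Ap *ᵥ E ω) :
    ∫ ω, ∑ i, (X ω i - Xhat ω i) ^ 2 ∂μ
      = Matrix.trace ((1 - Ap * A) * Khalf) + Matrix.trace (Apᵀ * Ap * K) := by
  set P : Matrix (Fin d) (Fin d) ℝ := 1 - Ap * A with hP
  set Y : Ω → Fin d → ℝ := fun ω i => X ω i - 1/2 with hY
  -- algebraic facts
  have hPP : Pᵀ * P = P := by
    have hidem : (Ap * A) * (Ap * A) = Ap * A := by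
      rw [← Matrix.mul_assoc, h2]
    have hPt : Pᵀ = P := by
      rw [hP, Matrix.transpose_sub, Matrix.transpose_one, h4]
    rw [hPt, hP]
    rw [Matrix.sub_mul, Matrix.one_mul, Matrix.mul_sub, Matrix.mul_one, hidem]
    abel
  have hPAp : Pᵀ * Ap = 0 := by
    have hPt : Pᵀ = P := by
      rw [hP, Matrix.transpose_sub, Matrix.transpose_one, h4]
    rw [hPt, hP, Matrix.sub_mul, Matrix.one_mul, h2, sub_self]
  -- pointwise decomposition
  have hdec : ∀ ω i, X ω i - Xhat ω i = (P *ᵥ Y ω) i - (Ap *ᵥ E ω) i := by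
    intro ω i
    rw [hXhat ω]
    simp only [Pi.add_apply, Pi.smul_apply, smul_eq_mul, hP, Matrix.sub_mulVec,
      Matrix.one_mulVec, Pi.sub_apply, Matrix.mulVec_mulVec]
    have hYdef : Y ω = fun i => X ω i - 1/2 := rfl
    have hYm : (Ap * A) *ᵥ Y ω = (Ap * A) *ᵥ X ω - (1/2 : ℝ) • ((Ap * A) *ᵥ fun _ => (1:ℝ)) := by
      have : Y ω = X ω - (1/2 : ℝ) • (fun _ => (1:ℝ)) := by
        funext j; simp [hYdef]
      rw [this, Matrix.mulVec_sub, Matrix.mulVec_smul]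
    rw [hYm]
    simp only [Pi.sub_apply, Pi.smul_apply, smul_eq_mul, hYdef]
    ring
  have hYint : ∀ i j, Integrable (fun ω => Y ω i * Y ω j) μ := by
    intro i j
    have : (fun ω => Y ω i * Y ω j)
        = fun ω => X ω i * X ω j - (1/2) * X ω i - (1/2) * X ω j + 1/4 := by
      funext ω; simp only [hY]; ring
    rw [this]
    exact ((((hXij i j).sub ((hXi i).const_mul _)).sub ((hXi j).const_mul _)).add
      (integrable_const _))
  obtain ⟨hint1, heq1⟩ := key_int μ P Y hYint
  obtain ⟨hint2, heq2⟩ := key_int μ Ap E hEij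
  -- pointwise equality of integrand
  have hpt : (fun ω => ∑ i, (X ω i - Xhat ω i) ^ 2)
      = fun ω => (∑ i, ((P *ᵥ Y ω) i) ^ 2) + (∑ i, ((Ap *ᵥ E ω) i) ^ 2) := by
    funext ω
    have hc := cross_zero P Ap hPAp (Y ω) (E ω)
    calc ∑ i, (X ω i - Xhat ω i) ^ 2
        = ∑ i, (((P *ᵥ Y ω) i) ^ 2 - 2 * ((P *ᵥ Y ω) i * (Ap *ᵥ E ω) i)
            + ((Ap *ᵥ E ω) i) ^ 2) := by
          refine Finset.sum_congr rfl fun i _ => ?_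
          rw [hdec ω i]; ring
      _ = (∑ i, ((P *ᵥ Y ω) i) ^ 2) - 2 * (∑ i, (P *ᵥ Y ω) i * (Ap *ᵥ E ω) i)
            + (∑ i, ((Ap *ᵥ E ω) i) ^ 2) := by
          rw [Finset.sum_add_distrib, Finset.sum_sub_distrib, Finset.mul_sum]
      _ = _ := by rw [hc]; ring
  rw [hpt, integral_add hint1 hint2, heq1, heq2, hPP]
  -- traces
  have ht1 : Matrix.trace (P * Khalf) = ∑ j, ∑ k, P j k * ∫ ω, Y ω j * Y ω k ∂μ := by
    rw [Matrix.trace]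
    simp only [Matrix.diag_apply, Matrix.mul_apply]
    refine Finset.sum_congr rfl fun j _ => Finset.sum_congr rfl fun k _ => ?_
    rw [hKhalf k j]
    congr 1
    refine integral_congr_ae (Filter.Eventually.of_forall fun ω => ?_)
    simp only [hY]; ring
  have ht2 : Matrix.trace (Apᵀ * Ap * K) = ∑ j, ∑ k, (Apᵀ * Ap) j k * ∫ ω, E ω j * E ω k ∂μ := by
    rw [Matrix.trace]
    simp only [Matrix.diag_apply, Matrix.mul_apply]
    refine Finset.sum_congr rfl fun j _ => Finset.sum_congr rfl fun k _ => ?_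
    rw [hK k j]
    congr 1
    exact integral_congr_ae (Filter.Eventually.of_forall fun ω => mul_comm _ _)
  rw [ht1, ht2]
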